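/- Let m > 0, k, M, θ̇₀ be real constants. On the open set of points (r, ϑ, φ, p_r, p_ϑ, p_φ) with r > 0, sin ϑ ≠ 0, and 1 + (θ̇₀/m)sin(2φ) > 0, consider the Hamiltonian H' = (1/(2m))[p_r² + M² p_ϑ²/r² + (1 + (θ̇₀/m)sin(2φ)) p_φ²/(r² sin²ϑ)] − k/r and the function L̃² = M² p_ϑ² + (1 + (θ̇₀/m)sin(2φ)) p_φ²/sin²ϑ (the squared modified angular momentum). Then L̃² is an integral of motion: the canonical Poisson bracket {H', L̃²}, summed over the three conjugate pairs (r,p_r), (ϑ,p_ϑ), (φ,p_φ), vanishes identically on this set. -/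

import Mathlib

open scoped BigOperators

/-- Phase space: an open subset of ℝ⁶ with spherical-polar coordinates
`z.1 = (r, ϑ, φ)` and conjugate momenta `z.2 = (p_r, p_ϑ, p_φ)`. -/
abbrev PhaseSpace := (Fin 3 → ℝ) × (Fin 3 → ℝ)

/-- Partial derivative of `f` with respect to the position coordinate indexed by `ν`. -/
noncomputable def pdQ (f : PhaseSpace → ℝ) (ν : Fin 3) (z : PhaseSpace) : ℝ :=
  fderiv ℝ f z (Pi.single ν 1, 0)

/-- Partial derivative of `f` with respect to the momentum coordinate indexed by `ν`. -/
noncomputable def pdP (f : PhaseSpace → ℝ) (ν : Fin 3) (z : PhaseSpace) : ℝ :=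
  fderiv ℝ f z (0, Pi.single ν 1)

/-- Canonical Poisson bracket, summed over the three conjugate pairs. -/
noncomputable def canBracket (f g : PhaseSpace → ℝ) (z : PhaseSpace) : ℝ :=
  ∑ ν : Fin 3, (pdP f ν z * pdQ g ν z - pdQ f ν z * pdP g ν z)

/-- The Kepler Hamiltonian in spherical-polar coordinates:
`H' = (1/(2m))[p_r² + M² p_ϑ²/r² + (1 + (θ̇₀/m) sin 2φ) p_φ²/(r² sin²ϑ)] − k/r`. -/
noncomputable def Hsph (m k M θ0 : ℝ) (z : PhaseSpace) : ℝ :=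
  (1 / (2 * m)) * ((z.2 0) ^ 2 + M ^ 2 * (z.2 1) ^ 2 / (z.1 0) ^ 2
      + (1 + (θ0 / m) * Real.sin (2 * z.1 2)) * (z.2 2) ^ 2
        / ((z.1 0) ^ 2 * (Real.sin (z.1 1)) ^ 2))
    - k / z.1 0

/-- The squared modified angular momentum
`L̃² = M² p_ϑ² + (1 + (θ̇₀/m) sin 2φ) p_φ²/sin²ϑ`. -/
noncomputable def Lsq (m M θ0 : ℝ) (z : PhaseSpace) : ℝ :=
  M ^ 2 * (z.2 1) ^ 2
    + (1 + (θ0 / m) * Real.sin (2 * z.1 2)) * (z.2 2) ^ 2 / (Real.sin (z.1 1)) ^ 2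

noncomputable def Qc (ν : Fin 3) : PhaseSpace →L[ℝ] ℝ :=
  (ContinuousLinearMap.proj ν).comp (ContinuousLinearMap.fst ℝ (Fin 3 → ℝ) (Fin 3 → ℝ))

noncomputable def Pc (ν : Fin 3) : PhaseSpace →L[ℝ] ℝ :=
  (ContinuousLinearMap.proj ν).comp (ContinuousLinearMap.snd ℝ (Fin 3 → ℝ) (Fin 3 → ℝ))

lemma myFDerivDiv {E : Type*} [NormedAddCommGroup E] [NormedSpace ℝ E]
    {f g : E → ℝ} {f' g' : E →L[ℝ] ℝ} {z : E}
    (hf : HasFDerivAt f f' z) (hg : HasFDerivAt g g' z) (hne : g z ≠ 0) :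
    HasFDerivAt (fun y => f y / g y)
      (f z • ((-((g z) ^ 2)⁻¹) • g') + (g z)⁻¹ • f') z := by
  have hinv : HasFDerivAt (fun y => (g y)⁻¹) ((-((g z) ^ 2)⁻¹) • g') z :=
    (hasDerivAt_inv hne).comp_hasFDerivAt z hg
  rw [show (fun y => f y / g y) = fun y => f y * (g y)⁻¹ from funext fun y => div_eq_mul_inv _ _]
  exact hf.mul hinv

set_option maxHeartbeats 1000000 in
/-- `L̃²` is an integral of motion for the spherical-polar Kepler Hamiltonian:
`{H', L̃²} = 0` on the open set `r > 0`, `sin ϑ ≠ 0`, `1 + (θ̇₀/m) sin 2φ > 0`. -/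
theorem stmt11 (m k M θ0 : ℝ) (hm : 0 < m) :
    ∀ z : PhaseSpace, 0 < z.1 0 → Real.sin (z.1 1) ≠ 0 →
      0 < 1 + (θ0 / m) * Real.sin (2 * z.1 2) →
      canBracket (Hsph m k M θ0) (Lsq m M θ0) z = 0 := by
  intro z hr hs hApos
  have hmne : m ≠ 0 := ne_of_gt hm
  have hrne : z.1 0 ≠ 0 := ne_of_gt hr
  have hr2ne : (z.1 0) ^ 2 ≠ 0 := pow_ne_zero _ hrne
  have hs2ne : (Real.sin (z.1 1)) ^ 2 ≠ 0 := pow_ne_zero _ hs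
  have hq0 : HasFDerivAt (fun z : PhaseSpace => z.1 0) (Qc 0) z := (Qc 0).hasFDerivAt
  have hq1 : HasFDerivAt (fun z : PhaseSpace => z.1 1) (Qc 1) z := (Qc 1).hasFDerivAt
  have hq2 : HasFDerivAt (fun z : PhaseSpace => z.1 2) (Qc 2) z := (Qc 2).hasFDerivAt
  have hp0 : HasFDerivAt (fun z : PhaseSpace => z.2 0) (Pc 0) z := (Pc 0).hasFDerivAt
  have hp1 : HasFDerivAt (fun z : PhaseSpace => z.2 1) (Pc 1) z := (Pc 1).hasFDerivAt
  have hp2 : HasFDerivAt (fun z : PhaseSpace => z.2 2) (Pc 2) z := (Pc 2).hasFDerivAt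
  have hsin2 : HasFDerivAt (fun z : PhaseSpace => Real.sin (2 * z.1 2))
      (Real.cos (2 * z.1 2) • ((2:ℝ) • Qc 2)) z :=
    (Real.hasDerivAt_sin _).comp_hasFDerivAt z (hq2.const_mul 2)
  have hAd := (hsin2.const_mul (θ0 / m)).const_add 1
  have hsin1 : HasFDerivAt (fun z : PhaseSpace => Real.sin (z.1 1))
      (Real.cos (z.1 1) • Qc 1) z :=
    (Real.hasDerivAt_sin _).comp_hasFDerivAt z hq1
  have hs2 := (hasDerivAt_pow 2 (Real.sin (z.1 1))).comp_hasFDerivAt z hsin1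
  have hLnum := hAd.mul ((hasDerivAt_pow 2 (z.2 2)).comp_hasFDerivAt z hp2)
  have hLd := (((hasDerivAt_pow 2 (z.2 1)).comp_hasFDerivAt z hp1).const_mul
    (M ^ 2)).add (myFDerivDiv hLnum hs2 hs2ne)
  have hL : HasFDerivAt (Lsq m M θ0) _ z := hLd
  have hr2 := (hasDerivAt_pow 2 (z.1 0)).comp_hasFDerivAt z hq0
  have hterm2 := myFDerivDiv (((hasDerivAt_pow 2 (z.2 1)).comp_hasFDerivAt z hp1).const_mul
    (M ^ 2)) hr2 hr2ne
  have hden := hr2.mul hs2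
  have hterm3 := myFDerivDiv hLnum hden (mul_ne_zero hr2ne hs2ne)
  have hsum := ((((hasDerivAt_pow 2 (z.2 0)).comp_hasFDerivAt z hp0)).add hterm2).add hterm3
  have hkr := myFDerivDiv (hasFDerivAt_const k z) hq0 hrne
  have hHd := (hsum.const_mul (1 / (2 * m))).sub hkr
  have hH : HasFDerivAt (Hsph m k M θ0) _ z := hHd
  simp only [canBracket, pdQ, pdP, hH.fderiv, hL.fderiv, Fin.sum_univ_three]
  simp only [ContinuousLinearMap.add_apply, ContinuousLinearMap.sub_apply,
    ContinuousLinearMap.smul_apply, ContinuousLinearMap.coe_smul', Pi.smul_apply,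
    ContinuousLinearMap.coe_comp', Function.comp_apply, ContinuousLinearMap.zero_apply,
    ContinuousLinearMap.coe_sub', Pi.sub_apply, Qc, Pc,
    ContinuousLinearMap.proj_apply, ContinuousLinearMap.coe_fst', ContinuousLinearMap.coe_snd',
    smul_eq_mul, Pi.single_apply, Pi.mul_apply, Pi.zero_apply, Nat.cast_ofNat]
  simp (config := { decide := true }) only [reduceIte]
  field_simp
  ring
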